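/- The tight interval construction preserves the set of stochastic vectors: given u ≤ v in ℝ^m with nonnegative u, define ū_i = max(u_i, 1 − Σ_{j≠i} v_j) and v̄_i = min(v_i, 1 − Σ_{j≠i} u_j). Then the set of stochastic vectors x with u ≤ x ≤ v componentwise equals the set of stochastic vectors x with ū ≤ x ≤ v̄ componentwise. -/

import Mathlib

/-- A stochastic vector in `ℝ^m`: nonnegative entries summing to 1. -/
def IsStoch {m : ℕ} (x : Fin m → ℝ) : Prop := (∀ i, 0 ≤ x i) ∧ ∑ i, x i = 1

/-- The Tight Interval Algorithm preserves the set of stochastic vectors. -/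
theorem stmt_10 (m : ℕ) (u v : Fin m → ℝ)
    (hu0 : ∀ i, 0 ≤ u i) (huv : ∀ i, u i ≤ v i) :
    {x : Fin m → ℝ | IsStoch x ∧ ∀ i, u i ≤ x i ∧ x i ≤ v i} =
      {x : Fin m → ℝ | IsStoch x ∧ ∀ i,
        max (u i) (1 - ∑ j ∈ Finset.univ.erase i, v j) ≤ x i ∧
        x i ≤ min (v i) (1 - ∑ j ∈ Finset.univ.erase i, u j)} := by
  ext x
  simp only [Set.mem_setOf_eq]
  constructor
  · rintro ⟨hs, h⟩
    refine ⟨hs, fun i => ?_⟩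
    have hx : x i + ∑ j ∈ Finset.univ.erase i, x j = 1 := by
      rw [Finset.add_sum_erase _ _ (Finset.mem_univ i)]; exact hs.2
    have h1 : ∑ j ∈ Finset.univ.erase i, x j ≤ ∑ j ∈ Finset.univ.erase i, v j :=
      Finset.sum_le_sum fun j _ => (h j).2
    have h2 : ∑ j ∈ Finset.univ.erase i, u j ≤ ∑ j ∈ Finset.univ.erase i, x j :=
      Finset.sum_le_sum fun j _ => (h j).1
    exact ⟨max_le (h i).1 (by linarith), le_min (h i).2 (by linarith)⟩
  · rintro ⟨hs, h⟩
    exact ⟨hs, fun i => ⟨le_trans (le_max_left _ _) (h i).1,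
      le_trans (h i).2 (min_le_left _ _)⟩⟩
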